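/- For the homeomorphism f of the closed unit disk (f = h⁻¹∘g∘h on the open disk, identity on the boundary), the backward orbit of every point z with |z| < 1 converges to 0: lim_{n→∞} f⁻ⁿ(z) = 0, while f⁻ⁿ(z) = z for |z| = 1. -/

import Mathlib

/-- The function ξ from the paper. -/
noncomputable def xi (r : ℝ) : ℝ :=
  if r ≤ 1 then 0
  else
    if Even ⌊Real.log r⌋ then
      (Real.log r - (⌊Real.log r⌋ : ℝ)) /
        (2 : ℝ) ^ (⌊Real.logb 2 (((⌊Real.log r / 2⌋ + 1 : ℤ) : ℝ))⌋)
    else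
      (1 - (Real.log r - (⌊Real.log r⌋ : ℝ))) /
        (2 : ℝ) ^ (⌊Real.logb 2 (((⌊Real.log r / 2⌋ + 1 : ℤ) : ℝ))⌋)

/-- The map f from the paper, as a map of ℂ (it preserves the closed unit disk). -/
noncomputable def fMap (z : ℂ) : ℂ :=
  if ‖z‖ = 0 ∨ ‖z‖ = 1 then z
  else (Real.exp 2 : ℂ) * z / ((Real.exp 2 * ‖z‖ - ‖z‖ + 1 : ℝ) : ℂ) *
    Complex.exp (2 * Real.pi * Complex.I * xi (‖z‖ / (1 - ‖z‖)))

lemma abs_exp_pi (x : ℝ) : ‖Complex.exp (2 * Real.pi * Complex.I * x)‖ = 1 := by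
  have : (2 * Real.pi * Complex.I * x) = ((2 * Real.pi * x : ℝ) : ℂ) * Complex.I := by
    push_cast; ring
  rw [this, Complex.norm_exp_ofReal_mul_I]

lemma fMap_boundary (z : ℂ) (h : ‖z‖ = 1) : fMap z = z := by
  simp [fMap, h]

lemma fMap_abs (z : ℂ) (h0 : ‖z‖ ≠ 0) (h1 : ‖z‖ < 1) :
    ‖fMap z‖ =
      Real.exp 2 * ‖z‖ / (Real.exp 2 * ‖z‖ - ‖z‖ + 1) := by
  have hD : (0:ℝ) < Real.exp 2 * ‖z‖ - ‖z‖ + 1 := by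
    nlinarith [Real.add_one_le_exp (2:ℝ), norm_nonneg z]
  rw [fMap, if_neg (by push_neg; exact ⟨h0, ne_of_lt h1⟩)]
  rw [norm_mul, abs_exp_pi, mul_one, norm_div, norm_mul, Complex.norm_real,
    Complex.norm_real, Real.norm_eq_abs, Real.norm_eq_abs, abs_of_nonneg (Real.exp_pos 2).le, abs_of_pos hD]

lemma fMap_step (z : ℂ) (h1 : ‖z‖ < 1) :
    ‖fMap z‖ < 1 ∧
      ‖fMap z‖ / (1 - ‖fMap z‖) =
        Real.exp 2 * (‖z‖ / (1 - ‖z‖)) := by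
  by_cases h0 : ‖z‖ = 0
  · have hz : z = 0 := by simpa using h0
    subst hz
    simp [fMap]
  · have hr0 : 0 < ‖z‖ := lt_of_le_of_ne (norm_nonneg z) (Ne.symm h0)
    set r := ‖z‖ with hr
    have hD : (0:ℝ) < Real.exp 2 * r - r + 1 := by
      nlinarith [Real.add_one_le_exp (2:ℝ)]
    have habs := fMap_abs z h0 h1
    rw [← hr] at habs
    rw [habs]
    have hlt : Real.exp 2 * r / (Real.exp 2 * r - r + 1) < 1 := by
      rw [div_lt_one hD]; nlinarith
    refine ⟨hlt, ?_⟩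
    have h1r : (0:ℝ) < 1 - r := by linarith
    have hs : 1 - Real.exp 2 * r / (Real.exp 2 * r - r + 1)
        = (1 - r) / (Real.exp 2 * r - r + 1) := by
      rw [one_sub_div hD.ne']
      congr 1; ring
    rw [hs, div_div_div_eq, mul_div_assoc]
    rw [mul_comm (Real.exp 2 * r - r + 1) (1 - r), ← mul_div_assoc, mul_div_mul_right _ _ hD.ne', mul_div_assoc]

theorem fMap_backward_orbit (F : Homeomorph {z : ℂ // ‖z‖ ≤ 1} {z : ℂ // ‖z‖ ≤ 1})
    (hF : ∀ z : {z : ℂ // ‖z‖ ≤ 1}, (F z : ℂ) = fMap (z : ℂ)) :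
    (∀ z : {z : ℂ // ‖z‖ ≤ 1}, ‖(z : ℂ)‖ < 1 →
        Filter.Tendsto (fun n : ℕ => ((F.symm^[n] z : {z : ℂ // ‖z‖ ≤ 1}) : ℂ))
          Filter.atTop (nhds 0)) ∧
    (∀ z : {z : ℂ // ‖z‖ ≤ 1}, ‖(z : ℂ)‖ = 1 →
        ∀ n : ℕ, F.symm^[n] z = z) := by
  constructor
  · intro z hz
    set c : ℝ := ‖(z : ℂ)‖ / (1 - ‖(z : ℂ)‖) with hc
    have key : ∀ n : ℕ, ‖((F.symm^[n] z : {z : ℂ // ‖z‖ ≤ 1}) : ℂ)‖ < 1 ∧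
        ‖((F.symm^[n] z : {z : ℂ // ‖z‖ ≤ 1}) : ℂ)‖ /
          (1 - ‖((F.symm^[n] z : {z : ℂ // ‖z‖ ≤ 1}) : ℂ)‖) *
          (Real.exp 2) ^ n = c := by
      intro n
      induction n with
      | zero => simpa [hc] using hz
      | succ n ih =>
        obtain ⟨ih1, ih2⟩ := ih
        set w : {z : ℂ // ‖z‖ ≤ 1} := F.symm^[n+1] z with hw
        have hstep : F.symm^[n+1] z = F.symm (F.symm^[n] z) := Function.iterate_succ_apply' _ _ _
        have hFw : F w = F.symm^[n] z := by rw [hw, hstep]; exact F.apply_symm_apply _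
        have hfmap : fMap (w : ℂ) = ((F.symm^[n] z : {z : ℂ // ‖z‖ ≤ 1}) : ℂ) := by
          rw [← hF w, hFw]
        have hwlt : ‖(w : ℂ)‖ < 1 := by
          rcases lt_or_eq_of_le w.2 with h | h
          · exact h
          · exfalso
            rw [fMap_boundary _ h] at hfmap
            rw [hfmap] at h
            exact absurd h (ne_of_lt ih1)
        obtain ⟨hs1, hs2⟩ := fMap_step (w : ℂ) hwlt
        rw [hfmap] at hs1 hs2
        refine ⟨hwlt, ?_⟩
        rw [pow_succ]
        calc ‖(w : ℂ)‖ / (1 - ‖(w : ℂ)‖) * ((Real.exp 2) ^ n * Real.exp 2)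
            = (Real.exp 2 * (‖(w : ℂ)‖ / (1 - ‖(w : ℂ)‖))) * (Real.exp 2) ^ n := by ring
          _ = c := by rw [← hs2, ih2]
    have hbound : ∀ n : ℕ,
        ‖((F.symm^[n] z : {z : ℂ // ‖z‖ ≤ 1}) : ℂ)‖ ≤ c * (Real.exp (-2)) ^ n := by
      intro n
      obtain ⟨h1, h2⟩ := key n
      set g : ℝ := ‖((F.symm^[n] z : {z : ℂ // ‖z‖ ≤ 1}) : ℂ)‖ with hg
      have hg0 : 0 ≤ g := norm_nonneg _
      have h1g : 0 < 1 - g := by linarith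
      have ht : g / (1 - g) = c * (Real.exp (-2)) ^ n := by
        have hane : (Real.exp 2) ^ n ≠ 0 := pow_ne_zero _ (Real.exp_pos 2).ne'
        have : g / (1 - g) = c / (Real.exp 2) ^ n := by
          field_simp at h2 ⊢
          linarith [h2]
        rw [this, Real.exp_neg, inv_pow, div_eq_mul_inv]
      have hgle : g ≤ g / (1 - g) := by
        rw [le_div_iff₀ h1g]; nlinarith
      calc ‖((F.symm^[n] z : {z : ℂ // ‖z‖ ≤ 1}) : ℂ)‖ = g := rfl
        _ ≤ g / (1 - g) := hgle
        _ = c * (Real.exp (-2)) ^ n := ht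
    apply squeeze_zero_norm hbound
    rw [show (0:ℝ) = c * 0 by ring]
    apply Filter.Tendsto.const_mul
    apply tendsto_pow_atTop_nhds_zero_of_lt_one (Real.exp_pos (-2)).le
    rw [show (1:ℝ) = Real.exp 0 by simp]
    exact Real.exp_lt_exp.mpr (by norm_num)
  · intro z hz n
    have hfix : F.symm z = z := by
      have hFz : F z = z := Subtype.ext (by rw [hF z, fMap_boundary _ hz])
      conv_lhs => rw [← hFz]
      exact F.symm_apply_apply z
    induction n with
    | zero => rfl
    | succ n ih => rw [Function.iterate_succ_apply', ih, hfix]
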